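/- arXiv:2212.04880 — 2 statements merged into one kernel-verified Lean document; each statement's English description precedes it below -/
import Mathlib

section
/- Let G be a connected chordal graph. If K and K' are two maximal cliques of G lying in the same connected component of C(G) after deleting all edges of minimum weight (i.e., in the same unit), and K and K' are adjacent in C(G), then the weight |K∩K'| of the edge KK' is strictly greater than the minimum edge weight of C(G). -/
open SimpleGraph

attribute [local instance] Classical.propDecidable
set_option linter.unusedSectionVars false

variable {V : Type*} [Fintype V] [DecidableEq V]

/-- A graph is chordal if it has no induced cycle of length at least 4. -/
def IsChordal (G : SimpleGraph V) : Prop :=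
  ∀ n : ℕ, 4 ≤ n →
    ¬ ∃ f : Fin n ↪ V, ∀ i j, (cycleGraph n).Adj i j ↔ G.Adj (f i) (f j)

/-- `K` is a maximal clique of `G`. -/
def MaxClique (G : SimpleGraph V) (K : Finset V) : Prop :=
  G.IsClique (K : Set V) ∧ ∀ K' : Finset V, G.IsClique (K' : Set V) → K ⊆ K' → K = K'

/-- The type of maximal cliques of `G`. -/
abbrev CV (G : SimpleGraph V) := {K : Finset V // MaxClique G K}

/-- `S` is a `u`-`v` separator of `G`: `u, v ∉ S` and every `u`-`v` walk meets `S`. -/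
def Separates (G : SimpleGraph V) (S : Finset V) (u v : V) : Prop :=
  u ∉ S ∧ v ∉ S ∧ ∀ p : G.Walk u v, ∃ x ∈ p.support, x ∈ S

lemma Separates.symm' {G : SimpleGraph V} {S : Finset V} {u v : V}
    (h : Separates G S u v) : Separates G S v u := by
  obtain ⟨hu, hv, h⟩ := h
  refine ⟨hv, hu, fun p => ?_⟩
  obtain ⟨x, hx, hxS⟩ := h p.reverse
  refine ⟨x, ?_, hxS⟩
  simpa using hx

/-- `S` is a minimal `u`-`v` separator of `G`. -/
def MinSeparates (G : SimpleGraph V) (S : Finset V) (u v : V) : Prop :=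
  Separates G S u v ∧ ∀ S' : Finset V, S' ⊂ S → ¬ Separates G S' u v

lemma MinSeparates.symm' {G : SimpleGraph V} {S : Finset V} {u v : V}
    (h : MinSeparates G S u v) : MinSeparates G S v u :=
  ⟨h.1.symm', fun S' hS' hc => h.2 S' hS' hc.symm'⟩

/-- The clique graph `C(G)` of `G`: vertices are the maximal cliques; `K` and `K'` are
adjacent iff `K ∩ K'` is a minimal `u`-`v` separator for all `u ∈ K \ K'`, `v ∈ K' \ K`. -/
def cliqueGraph (G : SimpleGraph V) : SimpleGraph (CV G) where
  Adj K K' := K ≠ K' ∧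
    ∀ u ∈ K.1 \ K'.1, ∀ v ∈ K'.1 \ K.1, MinSeparates G (K.1 ∩ K'.1) u v
  symm := by
    constructor
    rintro K K' ⟨hne, h⟩
    refine ⟨hne.symm, fun u hu v hv => ?_⟩
    rw [Finset.inter_comm]
    exact (h v hv u hu).symm'
  loopless := by constructor; rintro K ⟨hne, -⟩; exact hne rfl

/-- A clique tree of `G`: a tree on the maximal cliques of `G` such that for every vertex
`v`, the maximal cliques containing `v` induce a connected subgraph (a subtree). -/
def IsCliqueTree (G : SimpleGraph V) (T : SimpleGraph (CV G)) : Prop :=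
  T.IsTree ∧ ∀ v : V, (T.induce {K : CV G | v ∈ K.1}).Connected

/-- `C(G) ⊖ S`: the clique graph with all edges labeled `S` deleted. -/
def deleteLabel (G : SimpleGraph V) (S : Finset V) : SimpleGraph (CV G) where
  Adj K K' := (cliqueGraph G).Adj K K' ∧ K.1 ∩ K'.1 ≠ S
  symm := by
    constructor
    rintro K K' ⟨h, hS⟩
    exact ⟨h.symm, by rwa [Finset.inter_comm]⟩
  loopless := by constructor; rintro K ⟨h, -⟩; exact (cliqueGraph G).irrefl h

/-- `w` is the minimum edge weight of `C(G)` (weights are `|K ∩ K'|`). -/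
def IsMinEdgeWeight (G : SimpleGraph V) (w : ℕ) : Prop :=
  (∃ K K' : CV G, (cliqueGraph G).Adj K K' ∧ (K.1 ∩ K'.1).card = w) ∧
    ∀ K K' : CV G, (cliqueGraph G).Adj K K' → w ≤ (K.1 ∩ K'.1).card

/-- `C(G)` with all edges of (minimum) weight `w` deleted; its connected components are
the units. -/
def unitGraph (G : SimpleGraph V) (w : ℕ) : SimpleGraph (CV G) where
  Adj K K' := (cliqueGraph G).Adj K K' ∧ (K.1 ∩ K'.1).card ≠ w
  symm := by
    constructor
    rintro K K' ⟨h, hw⟩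
    exact ⟨h.symm, by rwa [Finset.inter_comm]⟩
  loopless := by constructor; rintro K ⟨h, -⟩; exact (cliqueGraph G).irrefl h

/-- The type of units. -/
abbrev LUnit (G : SimpleGraph V) (w : ℕ) := (unitGraph G w).ConnectedComponent

/-- The unit containing a maximal clique `K`. -/
def umk (G : SimpleGraph V) (w : ℕ) (K : CV G) : LUnit G w :=
  (unitGraph G w).connectedComponentMk K

/-- The layer structure: units are its vertices; two units are adjacent iff some
edge of `C(G)` crosses them. -/
def layerGraph (G : SimpleGraph V) (w : ℕ) : SimpleGraph (LUnit G w) where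
  Adj U U' := U ≠ U' ∧ ∃ K K' : CV G,
    (cliqueGraph G).Adj K K' ∧ umk G w K = U ∧ umk G w K' = U'
  symm := by
    constructor
    rintro U U' ⟨hne, K, K', hadj, hK, hK'⟩
    exact ⟨hne.symm, K', K, hadj.symm, hK', hK⟩
  loopless := by constructor; rintro U ⟨hne, -⟩; exact hne rfl

/-- All edges of `C(G)` crossing `U` and `U'` have the label `S`. -/
def CrossLabel (G : SimpleGraph V) (w : ℕ) (U U' : LUnit G w) (S : Finset V) : Prop :=
  ∀ K K' : CV G, (cliqueGraph G).Adj K K' → umk G w K = U → umk G w K' = U' →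
    K.1 ∩ K'.1 = S

/-- `𝒱(U)`: the vertices of `G` contained in some maximal clique of the unit `U`. -/
def unitVerts (G : SimpleGraph V) (w : ℕ) (U : LUnit G w) : Set V :=
  {x | ∃ K : CV G, umk G w K = U ∧ x ∈ K.1}

/-- An MCS ordering of `G`: at each step, the visited vertex has the maximum number of
already visited neighbors among unvisited vertices. -/
def IsMCSOrdering (G : SimpleGraph V) (σ : Fin (Fintype.card V) ≃ V) : Prop :=
  ∀ i j : Fin (Fintype.card V), i ≤ j →
    (Finset.univ.filter fun l => l < i ∧ G.Adj (σ l) (σ j)).card ≤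
      (Finset.univ.filter fun l => l < i ∧ G.Adj (σ l) (σ i)).card

/-- A Prim ordering of `C(G)`: each vertex after the first is incident to an edge of
maximum weight among all edges between visited and unvisited vertices. -/
def IsPrimOrdering (G : SimpleGraph V) (π : Fin (Fintype.card (CV G)) ≃ CV G) : Prop :=
  ∀ i : Fin (Fintype.card (CV G)), 0 < (i : ℕ) →
    ∃ j, j < i ∧ (cliqueGraph G).Adj (π j) (π i) ∧
      ∀ j' k, j' < i → i ≤ k → (cliqueGraph G).Adj (π j') (π k) →
        ((π j').1 ∩ (π k).1).card ≤ ((π j).1 ∩ (π i).1).card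

/-- The position in `π` of the first maximal clique containing `x`. -/
noncomputable def firstIdx (G : SimpleGraph V)
    (π : Fin (Fintype.card (CV G)) ≃ CV G) (x : V) : ℕ :=
  sInf {j : ℕ | ∃ h : j < Fintype.card (CV G), x ∈ (π ⟨j, h⟩).1}

/-- `σ` is a generation of `π`. -/
def IsGeneration (G : SimpleGraph V) (π : Fin (Fintype.card (CV G)) ≃ CV G)
    (σ : Fin (Fintype.card V) ≃ V) : Prop :=
  ∀ x y : V, firstIdx G π x < firstIdx G π y → σ.symm x < σ.symm y

/-- `σ` is a linear extension of the relation `R`. -/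
def ExtendsR (R : V → V → Prop) (σ : Fin (Fintype.card V) ≃ V) : Prop :=
  ∀ x y : V, R x y → x ≠ y → σ.symm x < σ.symm y

/-- `π` respects `R`. -/
def RespectsR (G : SimpleGraph V) (R : V → V → Prop)
    (π : Fin (Fintype.card (CV G)) ≃ CV G) : Prop :=
  ∀ x y : V, R x y → x ≠ y → firstIdx G π x ≤ firstIdx G π y

/-- The set of vertices of `G` contained in one of the first `i` cliques of `π`. -/
def primPrefixVerts (G : SimpleGraph V) (π : Fin (Fintype.card (CV G)) ≃ CV G)
    (i : ℕ) : Set V :=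
  {x | ∃ j : Fin (Fintype.card (CV G)), (j : ℕ) < i ∧ x ∈ (π j).1}

lemma walk_avoid' (G : SimpleGraph V) (w : ℕ) (hw : IsMinEdgeWeight G w)
    (S : Finset V) (hcard : S.card = w) (v : V) (hvS : v ∉ S) :
    ∀ (L M : CV G), (unitGraph G w).Walk L M → v ∈ M.1 → ∀ x : V, x ∈ L.1 → x ∉ S →
      ∃ q : G.Walk x v, ∀ z ∈ q.support, z ∉ S := by
  intro L M p
  induction p with
  | nil =>
    rename_i M'
    intro hv x hx hxS
    by_cases hxv : x = v
    · subst hxv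
      exact ⟨Walk.nil, by simp [hxS]⟩
    · have hadj : G.Adj x v := M'.2.1 (Finset.mem_coe.mpr hx) (Finset.mem_coe.mpr hv) hxv
      exact ⟨Walk.cons hadj Walk.nil, by simp [hxS, hvS]⟩
  | cons h p ih =>
    rename_i L L1 _
    intro hv x hx hxS
    have ih := ih hv
    have hlt : w < (L.1 ∩ L1.1).card := lt_of_le_of_ne (hw.2 _ _ h.1) (Ne.symm h.2)
    have hnsub : ¬ (L.1 ∩ L1.1 ⊆ S) := by
      intro hsub
      exact absurd (Finset.card_le_card hsub) (by omega)
    obtain ⟨y, hy, hyS⟩ := Finset.not_subset.mp hnsub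
    have hy1 : y ∈ L1.1 := (Finset.mem_inter.mp hy).2
    have hyL : y ∈ L.1 := (Finset.mem_inter.mp hy).1
    obtain ⟨q, hq⟩ := ih y hy1 hyS
    by_cases hxy : x = y
    · subst hxy; exact ⟨q, hq⟩
    · have hadj : G.Adj x y := L.2.1 (Finset.mem_coe.mpr hx) (Finset.mem_coe.mpr hyL) hxy
      refine ⟨Walk.cons hadj q, ?_⟩
      intro z hz
      rw [Walk.support_cons, List.mem_cons] at hz
      rcases hz with rfl | hz
      · exact hxS
      · exact hq z hz

/-- an edge of `C(G)` whose endpoints lie in the same unit has weight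
strictly greater than the minimum edge weight of `C(G)`. -/
theorem stmt5 (G : SimpleGraph V) (hG : G.Connected) (hch : IsChordal G)
    (w : ℕ) (hw : IsMinEdgeWeight G w) (K K' : CV G)
    (hsame : umk G w K = umk G w K')
    (hadj : (cliqueGraph G).Adj K K') :
    w < (K.1 ∩ K'.1).card := by
  by_contra hlt
  have hcard : (K.1 ∩ K'.1).card = w := le_antisymm (not_lt.mp hlt) (hw.2 K K' hadj)
  -- K \ K' and K' \ K are nonempty
  have hKK' : K ≠ K' := hadj.1
  have hu : ∃ u, u ∈ K.1 \ K'.1 := by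
    by_contra h
    push_neg at h
    have hsub : K.1 ⊆ K'.1 := fun a ha => by
      by_contra hna
      exact h a (Finset.mem_sdiff.mpr ⟨ha, hna⟩)
    exact hKK' (Subtype.ext (K.2.2 K'.1 K'.2.1 hsub))
  have hv : ∃ v, v ∈ K'.1 \ K.1 := by
    by_contra h
    push_neg at h
    have hsub : K'.1 ⊆ K.1 := fun a ha => by
      by_contra hna
      exact h a (Finset.mem_sdiff.mpr ⟨ha, hna⟩)
    exact hKK' (Subtype.ext (K'.2.2 K.1 K.2.1 hsub).symm)
  obtain ⟨u, hu⟩ := hu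
  obtain ⟨v, hv⟩ := hv
  have hsep : Separates G (K.1 ∩ K'.1) u v := (hadj.2 u hu v hv).1
  obtain ⟨huS, hvS, hwalk⟩ := hsep
  have hreach : (unitGraph G w).Reachable K K' :=
    (SimpleGraph.ConnectedComponent.eq).mp hsame
  obtain ⟨p⟩ := hreach
  have hvK' : v ∈ K'.1 := (Finset.mem_sdiff.mp hv).1
  have huK : u ∈ K.1 := (Finset.mem_sdiff.mp hu).1
  obtain ⟨q, hq⟩ := walk_avoid' G w hw (K.1 ∩ K'.1) hcard v hvS K K' p hvK' u huK huS
  obtain ⟨x, hx, hxS⟩ := hwalk q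
  exact hq x hx hxS
end

section
/- Let G be a connected chordal graph and let U, U' be two distinct units of C(G). Then all edges of C(G) with one endpoint in U and the other in U' have the same label; that is, if K1K2 and K3K4 are edges of C(G) with K1,K3∈U and K2,K4∈U', then K1∩K2 = K3∩K4. -/
open SimpleGraph

attribute [local instance] Classical.propDecidable
set_option linter.unusedSectionVars false

variable {V : Type*} [Fintype V] [DecidableEq V]

/-- Reachability in `G` avoiding the set `S`. -/
def AvoidReach (G : SimpleGraph V) (S : Finset V) (u v : V) : Prop :=
  ∃ p : G.Walk u v, ∀ x ∈ p.support, x ∉ S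

lemma AvoidReach.refl' {G : SimpleGraph V} {S : Finset V} {u : V} (hu : u ∉ S) :
    AvoidReach G S u u :=
  ⟨SimpleGraph.Walk.nil, by simp [hu]⟩

lemma AvoidReach.symm_walk {G : SimpleGraph V} {S : Finset V} {u v : V}
    (h : AvoidReach G S u v) : AvoidReach G S v u := by
  obtain ⟨p, hp⟩ := h
  exact ⟨p.reverse, fun y hy => hp y (by simpa using hy)⟩

lemma AvoidReach.trans' {G : SimpleGraph V} {S : Finset V} {u v x : V}
    (h1 : AvoidReach G S u x) (h2 : AvoidReach G S x v) : AvoidReach G S u v := by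
  obtain ⟨p, hp⟩ := h1
  obtain ⟨q, hq⟩ := h2
  refine ⟨p.append q, fun y hy => ?_⟩
  rw [SimpleGraph.Walk.mem_support_append_iff] at hy
  exact hy.elim (hp y) (hq y)

lemma AvoidReach.adj' {G : SimpleGraph V} {S : Finset V} {u v : V}
    (h : G.Adj u v) (hu : u ∉ S) (hv : v ∉ S) : AvoidReach G S u v := by
  refine ⟨SimpleGraph.Walk.cons h SimpleGraph.Walk.nil, fun y hy => ?_⟩
  simp only [SimpleGraph.Walk.support_cons, SimpleGraph.Walk.support_nil,
    List.mem_cons, List.mem_singleton] at hy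
  rcases hy with rfl | rfl | h'
  · exact hu
  · exact hv
  · simp at h'

/-- Along a walk in the unit graph, avoid-`S`-reachability from `u` of all clique
vertices outside `S` is preserved, when `S.card = w` is the minimum edge weight. -/
lemma unit_reach (G : SimpleGraph V) (w : ℕ) (hw : IsMinEdgeWeight G w)
    (S : Finset V) (hScard : S.card = w) (u : V)
    {K0 K : CV G} (p : (unitGraph G w).Walk K0 K) :
    (∀ x ∈ K0.1, x ∉ S → AvoidReach G S u x) →
    ∀ x ∈ K.1, x ∉ S → AvoidReach G S u x := by
  induction p with
  | nil => exact id
  | @cons K0 Kc K h q ih =>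
    intro h0
    refine ih (fun y hy hyS => ?_)
    have hcard : S.card < (K0.1 ∩ Kc.1).card := by
      have h1 := hw.2 K0 Kc h.1
      have h2 := h.2
      omega
    have hns : ¬ (K0.1 ∩ Kc.1 ⊆ S) := fun hsub => absurd (Finset.card_le_card hsub) (by omega)
    obtain ⟨a, ha, haS⟩ := Finset.not_subset.mp hns
    have ha0 : a ∈ K0.1 := (Finset.mem_inter.mp ha).1
    have hac : a ∈ Kc.1 := (Finset.mem_inter.mp ha).2
    have hua : AvoidReach G S u a := h0 a ha0 haS
    by_cases hay : a = y
    · exact hay ▸ hua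
    · exact hua.trans' (AvoidReach.adj' (Kc.2.1 (Finset.mem_coe.mpr hac)
        (Finset.mem_coe.mpr hy) hay) haS hyS)

lemma cross_card {G : SimpleGraph V} {w : ℕ} {K K' : CV G}
    (h : (cliqueGraph G).Adj K K') (hne : umk G w K ≠ umk G w K') :
    (K.1 ∩ K'.1).card = w := by
  by_contra hc
  exact hne (SimpleGraph.ConnectedComponent.sound ⟨SimpleGraph.Walk.cons ⟨h, hc⟩
    SimpleGraph.Walk.nil⟩)

lemma exists_mem_diff {G : SimpleGraph V} {K K' : CV G}
    (h : (cliqueGraph G).Adj K K') : ∃ u ∈ K.1, u ∉ K'.1 := by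
  rw [← Finset.not_subset]
  intro hsub
  exact h.1 (Subtype.ext (K.2.2 K'.1 K'.2.1 hsub))

/-- all edges of `C(G)` crossing two fixed distinct units have the same
label. -/
theorem stmt6 (G : SimpleGraph V) (hG : G.Connected) (hch : IsChordal G)
    (w : ℕ) (hw : IsMinEdgeWeight G w) (K1 K2 K3 K4 : CV G)
    (h12 : (cliqueGraph G).Adj K1 K2) (h34 : (cliqueGraph G).Adj K3 K4)
    (hU : umk G w K1 = umk G w K3) (hU' : umk G w K2 = umk G w K4)
    (hUU' : umk G w K1 ≠ umk G w K2) :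
    K1.1 ∩ K2.1 = K3.1 ∩ K4.1 := by
  have hU34 : umk G w K3 ≠ umk G w K4 := by
    rw [← hU, ← hU']; exact hUU'
  have hc12 : (K1.1 ∩ K2.1).card = w := cross_card h12 hUU'
  have hc34 : (K3.1 ∩ K4.1).card = w := cross_card h34 hU34
  set S := K3.1 ∩ K4.1 with hS
  -- pick u' ∈ K3 \ K4, v' ∈ K4 \ K3
  obtain ⟨u', hu3, hu4⟩ := exists_mem_diff h34
  obtain ⟨v', hv4, hv3⟩ := exists_mem_diff h34.symm
  have hmin : MinSeparates G S u' v' :=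
    h34.2 u' (Finset.mem_sdiff.mpr ⟨hu3, hu4⟩) v' (Finset.mem_sdiff.mpr ⟨hv4, hv3⟩)
  obtain ⟨huS, hvS, hsep⟩ := hmin.1
  -- key claim: K1 ∩ K2 ⊆ S
  have hsub : K1.1 ∩ K2.1 ⊆ S := by
    intro x hx
    obtain ⟨hx1, hx2⟩ := Finset.mem_inter.mp hx
    by_contra hxS
    -- x ∈ K1 with K1 in the unit of K3: reachable from u' avoiding S
    have hbase3 : ∀ y ∈ K3.1, y ∉ S → AvoidReach G S u' y := by
      intro y hy hyS
      by_cases huy : u' = y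
      · exact huy ▸ AvoidReach.refl' huS
      · exact AvoidReach.adj' (K3.2.1 (Finset.mem_coe.mpr hu3) (Finset.mem_coe.mpr hy) huy)
          huS hyS
    have hbase4 : ∀ y ∈ K4.1, y ∉ S → AvoidReach G S v' y := by
      intro y hy hyS
      by_cases hvy : v' = y
      · exact hvy ▸ AvoidReach.refl' hvS
      · exact AvoidReach.adj' (K4.2.1 (Finset.mem_coe.mpr hv4) (Finset.mem_coe.mpr hy) hvy)
          hvS hyS
    have hr31 : (unitGraph G w).Reachable K3 K1 :=
      SimpleGraph.ConnectedComponent.exact hU.symm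
    have hr42 : (unitGraph G w).Reachable K4 K2 :=
      SimpleGraph.ConnectedComponent.exact hU'.symm
    obtain ⟨p31⟩ := hr31
    obtain ⟨p42⟩ := hr42
    have hux : AvoidReach G S u' x :=
      unit_reach G w hw S hc34 u' p31 hbase3 x hx1 hxS
    have hvx : AvoidReach G S v' x :=
      unit_reach G w hw S hc34 v' p42 hbase4 x hx2 hxS
    obtain ⟨puv, hpuv⟩ := hux.trans' (hvx.symm_walk)
    obtain ⟨z, hz, hzS⟩ := hsep puv
    exact hpuv z hz hzS
  exact Finset.eq_of_subset_of_card_le hsub (by omega)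
end
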